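/- Let t be an ordered labeled tree and let v1, v2 be distinct nodes of t. Then pos'(v̄1) < pos'(v̄2) if and only if at least one of the following holds: (1) v1 lies in the subtree of v2 in the binary tree FCNS(t) (equivalently: in t, v1 is a descendant of v2, or v1 is a later sibling of v2, or v1 is a descendant of a later sibling of v2); or (2) there exists a node u of t with depth(u) ≤ depth(v1) − 1 and pos(v1) < pos(u) ≤ pos(v2). -/

import Mathlib

/-- Ordered labeled trees (rose trees). -/
inductive RTree (α : Type) : Type
  | node : α → List (RTree α) → RTree α

/-- Extended binary trees: every node has an optional left and right child. -/
inductive BTree (α : Type) : Type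
  | nil : BTree α
  | node : α → BTree α → BTree α → BTree α

namespace BTree

/-- Tag sequence of an extended binary tree: opening tag, left subtree,
right subtree, closing tag.  `false` = opening tag, `true` = closing tag. -/
def btags {α : Type} : BTree α → List (α × Bool)
  | .nil => []
  | .node a l r => (a, false) :: (btags l ++ btags r ++ [(a, true)])

end BTree

namespace RTree

variable {α : Type}

def label : RTree α → α
  | .node a _ => a

def childLabels : RTree α → List α
  | .node _ cs => cs.map label

mutual
/-- Number of nodes of a tree. -/
def size : RTree α → ℕ
  | .node _ cs => 1 + sizeL cs
def sizeL : List (RTree α) → ℕ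
  | [] => 0
  | c :: cs => size c + sizeL cs
end

mutual
/-- `XML(t)`: the tag sequence of a depth-first traversal;
`(a, false)` is an opening tag, `(a, true)` a closing tag. -/
def xml : RTree α → List (α × Bool)
  | .node a cs => (a, false) :: (xmlL cs ++ [(a, true)])
def xmlL : List (RTree α) → List (α × Bool)
  | [] => []
  | c :: cs => xml c ++ xmlL cs
end

mutual
/-- XML tag sequence where each node is identified by its path
(list of child indices from the root). -/
def ptags : RTree α → List ℕ → List (List ℕ × Bool)
  | .node _ cs, p => (p, false) :: (ptagsL cs p 0 ++ [(p, true)])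
def ptagsL : List (RTree α) → List ℕ → ℕ → List (List ℕ × Bool)
  | [], _, _ => []
  | c :: cs, p, i => ptags c (p ++ [i]) ++ ptagsL cs p (i + 1)
end

/-- `XML(t)`, with nodes identified by their paths. -/
def tagList (t : RTree α) : List (List ℕ × Bool) := ptags t []

/-- `pos(v)`: (1-indexed) position of the opening tag of node `v` in `XML(t)`. -/
def posOpen (t : RTree α) (v : List ℕ) : ℕ := (tagList t).idxOf (v, false) + 1

/-- `pos(v̄)`: (1-indexed) position of the closing tag of node `v` in `XML(t)`. -/
def posClose (t : RTree α) (v : List ℕ) : ℕ := (tagList t).idxOf (v, true) + 1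

/-- Subtree of `t` rooted at the node with path `p` (if any). -/
def subtreeAt : RTree α → List ℕ → Option (RTree α)
  | t, [] => some t
  | .node _ cs, i :: p =>
    match cs[i]? with
    | some c => subtreeAt c p
    | none => none

/-- `p` is (the path of) a node of `t`. -/
def IsNode (t : RTree α) (p : List ℕ) : Prop := (subtreeAt t p).isSome

/-- First-child next-sibling encoding of a forest. -/
def fcnsL : List (RTree α) → BTree α
  | [] => .nil
  | .node a cs :: ts => .node a (fcnsL cs) (fcnsL ts)

/-- First-child next-sibling encoding `FCNS(t)`. -/
def fcns (t : RTree α) : BTree α := fcnsL [t]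

/-- FCNS encoding of a forest, nodes identified by their paths in the original tree;
`p` is the path of the parent, `i` the index of the first tree of the forest. -/
def pfcnsL : List (RTree α) → List ℕ → ℕ → BTree (List ℕ)
  | [], _, _ => .nil
  | .node _ cs :: ts, p, i =>
      .node (p ++ [i]) (pfcnsL cs (p ++ [i]) 0) (pfcnsL ts p (i + 1))

/-- `FCNS(t)`, with nodes identified by their paths in `t`. -/
def pfcns : RTree α → BTree (List ℕ)
  | .node _ cs => .node [] (pfcnsL cs [] 0) .nil

/-- `XML(FCNS(t))`, with nodes identified by their paths in `t`. -/
def btagList (t : RTree α) : List (List ℕ × Bool) := (pfcns t).btags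

/-- `pos'(v)`: position of the opening tag of `v` in `XML(FCNS(t))`. -/
def posOpen' (t : RTree α) (v : List ℕ) : ℕ := (btagList t).idxOf (v, false) + 1

/-- `pos'(v̄)`: position of the closing tag of `v` in `XML(FCNS(t))`. -/
def posClose' (t : RTree α) (v : List ℕ) : ℕ := (btagList t).idxOf (v, true) + 1

/-- A tree is valid against a DTD `D` if for every node, the word of labels of
its children belongs to `D` applied to the node's label. -/
def Valid (D : α → List α → Prop) (t : RTree α) : Prop :=
  ∀ p st, subtreeAt t p = some st → D st.label st.childLabels

end RTree

set_option linter.unusedSectionVars false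
set_option linter.unnecessarySeqFocus false


section Before
variable {β : Type} [BEq β] [LawfulBEq β]

def Before (a b : β) (l : List β) : Prop := ∃ l₁ l₂, l = l₁ ++ a :: l₂ ∧ b ∈ l₂

lemma indexOf_append_cons_self (a : β) (l₁ l₂ : List β) (h : a ∉ l₁) :
    (l₁ ++ a :: l₂).idxOf a = l₁.length := by
  induction l₁ with
  | nil => simp [List.idxOf_cons]
  | cons x xs ih =>
    simp only [List.mem_cons, not_or] at h
    have hx : (x == a) = false := beq_eq_false_iff_ne.mpr (Ne.symm h.1)
    rw [List.cons_append, List.idxOf_cons, hx, ih h.2]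
    rfl

lemma length_lt_indexOf (a b : β) (l₁ l₂ : List β) (h1 : b ∉ l₁) (h2 : b ≠ a) :
    l₁.length < (l₁ ++ a :: l₂).idxOf b := by
  induction l₁ with
  | nil =>
    have ha : (a == b) = false := beq_eq_false_iff_ne.mpr (Ne.symm h2)
    simp [List.idxOf_cons, ha]
  | cons x xs ih =>
    simp only [List.mem_cons, not_or] at h1
    have hx : (x == b) = false := beq_eq_false_iff_ne.mpr (Ne.symm h1.1)
    rw [List.cons_append, List.idxOf_cons, hx]
    simpa using Nat.succ_lt_succ (ih h1.2)

lemma Before.indexOf_lt {a b : β} {l : List β} (h : Before a b l) (hn : l.Nodup) :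
    l.idxOf a < l.idxOf b := by
  obtain ⟨l₁, l₂, rfl, hb⟩ := h
  rw [List.nodup_append] at hn
  obtain ⟨h1, h2, hdisj⟩ := hn
  have ha1 : a ∉ l₁ := fun h => hdisj a h a List.mem_cons_self rfl
  have hb1 : b ∉ l₁ := fun h => hdisj b h b (List.mem_cons_of_mem _ hb) rfl
  have hba : b ≠ a := by rintro rfl; exact (List.nodup_cons.mp h2).1 hb
  rw [indexOf_append_cons_self a l₁ l₂ ha1]
  exact length_lt_indexOf a b l₁ l₂ hb1 hba

lemma Before.append_right {a b : β} {l : List β} (h : Before a b l) (l' : List β) :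
    Before a b (l ++ l') := by
  obtain ⟨l₁, l₂, rfl, hb⟩ := h
  exact ⟨l₁, l₂ ++ l', by simp, List.mem_append_left _ hb⟩

lemma Before.append_left {a b : β} {l : List β} (l' : List β) (h : Before a b l) :
    Before a b (l' ++ l) := by
  obtain ⟨l₁, l₂, rfl, hb⟩ := h
  exact ⟨l' ++ l₁, l₂, by simp, hb⟩

lemma Before.cons {a b : β} {l : List β} (x : β) (h : Before a b l) :
    Before a b (x :: l) := h.append_left [x]

lemma before_of_mem {a b : β} {l l' : List β} (ha : a ∈ l) (hb : b ∈ l') :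
    Before a b (l ++ l') := by
  obtain ⟨s, t, rfl⟩ := List.append_of_mem ha
  exact ⟨s, t ++ l', by simp, List.mem_append_right _ hb⟩

lemma before_cons_of_mem {a b : β} {l : List β} (hb : b ∈ l) : Before a b (a :: l) :=
  ⟨[], l, rfl, hb⟩

end Before


abbrev LexLt (p q : List ℕ) : Prop := List.Lex (· < ·) p q

lemma lex_trichotomy (p q : List ℕ) : p = q ∨ LexLt p q ∨ LexLt q p := by
  induction p generalizing q with
  | nil => cases q with
    | nil => left; rfl
    | cons y ys => right; left; exact List.Lex.nil
  | cons x xs ih =>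
    cases q with
    | nil => right; right; exact List.Lex.nil
    | cons y ys =>
      rcases Nat.lt_trichotomy x y with h | rfl | h
      · right; left; exact List.Lex.rel h
      · rcases ih ys with rfl | h | h
        · left; rfl
        · right; left; exact List.Lex.cons h
        · right; right; exact List.Lex.cons h
      · right; right; exact List.Lex.rel h

lemma lex_asymm {p q : List ℕ} (h : LexLt p q) (h' : LexLt q p) : False := by
  induction h with
  | nil => cases h'
  | @rel a l b m hab =>
    cases h' with
    | rel hba => exact absurd hab (Nat.lt_asymm hba)
    | cons _ => exact absurd hab (lt_irrefl _)
  | @cons a l m hlm ih =>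
    cases h' with
    | rel hba => exact absurd hba (lt_irrefl _)
    | cons h2 => exact ih h2

lemma lex_irrefl {p : List ℕ} (h : LexLt p p) : False := lex_asymm h h

lemma lex_of_prefix {p r : List ℕ} (hr : r ≠ []) : LexLt p (p ++ r) := by
  induction p with
  | nil => cases r with
    | nil => exact absurd rfl hr
    | cons y ys => exact List.Lex.nil
  | cons x xs ih => exact List.Lex.cons ih

lemma lex_append_cons {a b : ℕ} (s p' q' : List ℕ) (hab : a < b) :
    LexLt (s ++ a :: p') (s ++ b :: q') := by
  induction s with
  | nil => exact List.Lex.rel hab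
  | cons x xs ih => exact List.Lex.cons ih

lemma lex_cases {p q : List ℕ} (h : LexLt p q) :
    p <+: q ∨ ∃ s a b p' q', a < b ∧ p = s ++ a :: p' ∧ q = s ++ b :: q' := by
  induction h with
  | @nil a l => left; exact List.nil_prefix
  | @rel a l b m hab => right; exact ⟨[], a, b, l, m, hab, rfl, rfl⟩
  | @cons x l m hlm ih =>
    rcases ih with hpre | ⟨s, a, b, p', q', hab, rfl, rfl⟩
    · left; exact (List.cons_prefix_cons.mpr ⟨rfl, hpre⟩)
    · right; exact ⟨x :: s, a, b, p', q', hab, rfl, rfl⟩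

/-- FCNS-postorder strict order on paths. -/
def PostLT : List ℕ → List ℕ → Prop
  | [], _ => False
  | _ :: _, [] => True
  | i :: p', j :: q' =>
      (i = j ∧ PostLT p' q') ∨ (i < j ∧ p' ≠ []) ∨ (j < i ∧ q' = [])

@[simp] lemma postLT_nil_left (q : List ℕ) : ¬ PostLT [] q := by cases q <;> simp [PostLT]

@[simp] lemma postLT_cons_nil (i : ℕ) (p : List ℕ) : PostLT (i :: p) [] := by simp [PostLT]

lemma postLT_cons_cons {i j : ℕ} {p' q' : List ℕ} :
    PostLT (i :: p') (j :: q') ↔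
      (i = j ∧ PostLT p' q') ∨ (i < j ∧ p' ≠ []) ∨ (j < i ∧ q' = []) := Iff.rfl

lemma postLT_total {p q : List ℕ} (h : p ≠ q) : PostLT p q ∨ PostLT q p := by
  induction p generalizing q with
  | nil => cases q with
    | nil => exact absurd rfl h
    | cons y ys => right; simp
  | cons x xs ih =>
    cases q with
    | nil => left; simp
    | cons y ys =>
      rcases Nat.lt_trichotomy x y with hxy | rfl | hxy
      · rcases eq_or_ne xs [] with rfl | hxs
        · right; rw [postLT_cons_cons]; right; right; exact ⟨hxy, rfl⟩
        · left; rw [postLT_cons_cons]; right; left; exact ⟨hxy, hxs⟩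
      · have hne : xs ≠ ys := fun hh => h (by rw [hh])
        rcases ih hne with h1 | h1
        · left; rw [postLT_cons_cons]; left; exact ⟨rfl, h1⟩
        · right; rw [postLT_cons_cons]; left; exact ⟨rfl, h1⟩
      · rcases eq_or_ne ys [] with rfl | hys
        · left; rw [postLT_cons_cons]; right; right; exact ⟨hxy, rfl⟩
        · right; rw [postLT_cons_cons]; right; left; exact ⟨hxy, hys⟩

lemma postLT_of_prefix {q r : List ℕ} (hr : r ≠ []) : PostLT (q ++ r) q := by
  induction q with
  | nil => cases r with
    | nil => exact absurd rfl hr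
    | cons y ys => simp
  | cons x xs ih => rw [List.cons_append, postLT_cons_cons]; left; exact ⟨rfl, ih⟩

lemma postLT_div1 {a b : ℕ} (s p' q' : List ℕ) (hab : a < b) (hp' : p' ≠ []) :
    PostLT (s ++ a :: p') (s ++ b :: q') := by
  induction s with
  | nil => rw [List.nil_append, List.nil_append, postLT_cons_cons]; right; left; exact ⟨hab, hp'⟩
  | cons x xs ih => rw [List.cons_append, List.cons_append, postLT_cons_cons]; left; exact ⟨rfl, ih⟩

lemma postLT_div2 {a b : ℕ} (s p' : List ℕ) (hba : b < a) :
    PostLT (s ++ a :: p') (s ++ [b]) := by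
  induction s with
  | nil => rw [List.nil_append, List.nil_append, postLT_cons_cons]; right; right; exact ⟨hba, rfl⟩
  | cons x xs ih => rw [List.cons_append, List.cons_append, postLT_cons_cons]; left; exact ⟨rfl, ih⟩

lemma postLT_cases {p q : List ℕ} (h : PostLT p q) :
    (q <+: p ∧ p ≠ q) ∨
    (∃ s a b p' q', a < b ∧ p = s ++ a :: p' ∧ p' ≠ [] ∧ q = s ++ b :: q') ∨
    (∃ s a b p', b < a ∧ p = s ++ a :: p' ∧ q = s ++ [b]) := by
  induction p generalizing q with
  | nil => exact absurd h (postLT_nil_left q)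
  | cons x xs ih =>
    cases q with
    | nil => left; exact ⟨List.nil_prefix, by simp⟩
    | cons y ys =>
      rw [postLT_cons_cons] at h
      rcases h with ⟨rfl, h⟩ | ⟨hxy, hxs⟩ | ⟨hyx, rfl⟩
      · rcases ih h with ⟨hpre, hne⟩ | ⟨s, a, b, p', q', hab, rfl, hp', rfl⟩ | ⟨s, a, b, p', hba, rfl, rfl⟩
        · left; exact ⟨(List.cons_prefix_cons.mpr ⟨rfl, hpre⟩), fun hh => hne (by injection hh)⟩
        · right; left; exact ⟨x :: s, a, b, p', q', hab, rfl, hp', rfl⟩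
        · right; right; exact ⟨x :: s, a, b, p', hba, rfl, rfl⟩
      · right; left; exact ⟨[], x, y, xs, ys, hxy, rfl, hxs, rfl⟩
      · right; right; exact ⟨[], x, y, xs, hyx, rfl, rfl⟩

/-- Decompositions of the same list: shorter first part is a proper prefix. -/
lemma decomp_lt {s₂ s : List ℕ} {c b : ℕ} {u₃ u₂ : List ℕ}
    (heq : s₂ ++ c :: u₃ = s ++ b :: u₂) (hlen : s₂.length < s.length) :
    ∃ s₃, s = s₂ ++ c :: s₃ := by
  induction s₂ generalizing s with
  | nil =>
    cases s with
    | nil => simp at hlen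
    | cons z zs =>
      rw [List.nil_append, List.cons_append] at heq
      injection heq with h1 h2
      exact ⟨zs, by rw [h1, List.nil_append]⟩
  | cons x xs ih =>
    cases s with
    | nil => simp at hlen
    | cons z zs =>
      rw [List.cons_append, List.cons_append] at heq
      injection heq with h1 h2
      obtain ⟨s₃, hs₃⟩ := ih h2 (Nat.lt_of_succ_lt_succ (by simpa using hlen))
      exact ⟨s₃, by rw [h1, hs₃, List.cons_append]⟩

def LaterSib' (w v : List ℕ) : Prop := ∃ q i j, v = q ++ [i] ∧ w = q ++ [j] ∧ i < j

/-- Combinatorial core: PostLT vs the (lex-translated) RHS, for paths where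
`IsN` is a prefix-closed predicate holding on `q`. -/
lemma postLT_iff_rhs {IsN : List ℕ → Prop}
    (hpc : ∀ {x y : List ℕ}, IsN y → x <+: y → IsN x)
    {p q : List ℕ} (hq : IsN q) (hne : p ≠ q) :
    PostLT p q ↔
      ((q <+: p ∨ ∃ w, LaterSib' w q ∧ w <+: p) ∨
        ∃ u, IsN u ∧ u.length + 1 ≤ p.length ∧ LexLt p u ∧ (u = q ∨ LexLt u q)) := by
  constructor
  · intro h
    rcases postLT_cases h with ⟨hpre, _⟩ | ⟨s, a, b, p', q', hab, rfl, hp', rfl⟩ |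
      ⟨s, a, b, p', hba, rfl, rfl⟩
    · exact Or.inl (Or.inl hpre)
    · right
      refine ⟨s ++ [b], hpc hq ⟨q', by simp⟩, ?_, ?_, ?_⟩
      · have : 1 ≤ p'.length := by
          cases p' with
          | nil => exact absurd rfl hp'
          | cons _ _ => simp
        simp only [List.length_append, List.length_cons, List.length_nil]
        omega
      · simpa using lex_append_cons s p' [] hab
      · cases q' with
        | nil => left; rfl
        | cons y ys =>
          right
          have : s ++ b :: y :: ys = (s ++ [b]) ++ (y :: ys) := by simp
          rw [this]
          exact lex_of_prefix (by simp)
    · left; right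
      exact ⟨s ++ [a], ⟨s, b, a, rfl, rfl, hba⟩, ⟨p', by simp⟩⟩
  · rintro (⟨⟨r, rfl⟩ | ⟨w, ⟨s, i, j, rfl, rfl, hij⟩, ⟨r, rfl⟩⟩⟩ | ⟨u, _, hlen, hpu, huq⟩)
    · exact postLT_of_prefix (fun hr => hne (by simp [hr]))
    · have : s ++ [j] ++ r = s ++ j :: r := by simp
      rw [this]
      exact postLT_div2 s r hij
    · -- p < u lex, |u| + 1 ≤ |p|, u ≤ q
      rcases lex_cases hpu with ⟨r, rfl⟩ | ⟨s, a, b, p₂, u₂, hab, rfl, rfl⟩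
      · simp at hlen
      · have hp₂ : p₂ ≠ [] := by
          intro hh
          subst hh
          simp only [List.length_append, List.length_cons, List.length_nil] at hlen
          omega
        rcases huq with rfl | hlex
        · exact postLT_div1 s p₂ u₂ hab hp₂
        · rcases lex_cases hlex with ⟨r, hr⟩ | ⟨s₂, c, d, u₃, q₃, hcd, heq, rfl⟩
          · -- q = (s ++ b :: u₂) ++ r
            rw [← hr, List.append_assoc, List.cons_append]
            exact postLT_div1 s p₂ (u₂ ++ r) hab hp₂
          · -- u = s ++ b :: u₂ = s₂ ++ c :: u₃,  q = s₂ ++ d :: q₃, c < d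
            rcases Nat.lt_trichotomy s₂.length s.length with hl | hl | hl
            · obtain ⟨s₃, hs₃⟩ := decomp_lt heq.symm hl
              subst hs₃
              have hps : s₂ ++ c :: s₃ ++ a :: p₂ = s₂ ++ c :: (s₃ ++ a :: p₂) := by simp
              rw [hps]
              exact postLT_div1 s₂ _ q₃ hcd (by simp)
            · obtain ⟨h1, h2⟩ := List.append_inj heq hl.symm
              injection h2 with h3 h4
              subst h1; subst h3
              exact postLT_div1 s p₂ q₃ (hab.trans hcd) hp₂
            · obtain ⟨s₄, hs₄⟩ := decomp_lt heq hl
              subst hs₄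
              have hqs : s ++ b :: s₄ ++ d :: q₃ = s ++ b :: (s₄ ++ d :: q₃) := by simp
              rw [hqs]
              exact postLT_div1 s p₂ _ hab hp₂


namespace RTree
variable {α : Type}

-- ==================== IsNode lemmas ====================

@[simp] lemma subtreeAt_nil (t : RTree α) : subtreeAt t [] = some t := by
  cases t <;> rfl

@[simp] lemma isNode_nil (t : RTree α) : IsNode t [] := by
  simp [IsNode]

lemma isNode_cons {a : α} {cs : List (RTree α)} {k : ℕ} {p : List ℕ} :
    IsNode (node a cs) (k :: p) ↔ ∃ c, cs[k]? = some c ∧ IsNode c p := by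
  cases h : cs[k]? with
  | none => simp [IsNode, subtreeAt, h]
  | some c => simp [IsNode, subtreeAt, h]

lemma subtreeAt_append (p q : List ℕ) (t : RTree α) :
    subtreeAt t (p ++ q) = (subtreeAt t p).bind (fun s => subtreeAt s q) := by
  induction p generalizing t with
  | nil => simp
  | cons k p ih =>
    cases t with
    | node a cs =>
      cases h : cs[k]? with
      | none => simp [subtreeAt, h]
      | some c => simp [subtreeAt, h, ih]

lemma IsNode.of_prefix {t : RTree α} {p q : List ℕ} (h : IsNode t q) (hpre : p <+: q) :
    IsNode t p := by
  obtain ⟨r, rfl⟩ := hpre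
  rw [IsNode, subtreeAt_append] at h
  cases hh : subtreeAt t p with
  | none => rw [hh] at h; simp [Option.bind] at h
  | some s => simp [IsNode, hh]

-- ==================== membership shape lemmas ====================

mutual
theorem mem_ptags_shape (c : RTree α) (lbl : List ℕ) (x : List ℕ × Bool)
    (hx : x ∈ ptags c lbl) : ∃ r, x.1 = lbl ++ r := by
  match c with
  | .node a ccs =>
    rw [ptags] at hx
    rcases List.mem_cons.mp hx with rfl | hx
    · exact ⟨[], by simp⟩
    rcases List.mem_append.mp hx with hx | hx
    · obtain ⟨j, p, _, hj⟩ := mem_ptagsL_shape ccs lbl 0 x hx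
      exact ⟨j :: p, hj⟩
    · simp only [List.mem_singleton] at hx
      subst hx
      exact ⟨[], by simp⟩

theorem mem_ptagsL_shape (cs : List (RTree α)) (lbl : List ℕ) (i : ℕ) (x : List ℕ × Bool)
    (hx : x ∈ ptagsL cs lbl i) : ∃ j p, i ≤ j ∧ x.1 = lbl ++ j :: p := by
  match cs with
  | [] => rw [ptagsL] at hx; exact absurd hx List.not_mem_nil
  | c :: ts =>
    rw [ptagsL] at hx
    rcases List.mem_append.mp hx with hx | hx
    · obtain ⟨r, hr⟩ := mem_ptags_shape c (lbl ++ [i]) x hx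
      exact ⟨i, r, le_refl i, by simp [hr]⟩
    · obtain ⟨j, p, hij, hj⟩ := mem_ptagsL_shape ts lbl (i + 1) x hx
      exact ⟨j, p, by omega, hj⟩
end

theorem mem_btagsL_shape (cs : List (RTree α)) (lbl : List ℕ) (i : ℕ) (x : List ℕ × Bool)
    (hx : x ∈ (pfcnsL cs lbl i).btags) : ∃ j p, i ≤ j ∧ x.1 = lbl ++ j :: p := by
  match cs with
  | [] => rw [pfcnsL, BTree.btags] at hx; exact absurd hx List.not_mem_nil
  | .node a ccs :: ts =>
    rw [pfcnsL, BTree.btags] at hx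
    rcases List.mem_cons.mp hx with rfl | hx
    · exact ⟨i, [], le_refl i, by simp⟩
    rcases List.mem_append.mp hx with hx | hx
    rcases List.mem_append.mp hx with hx | hx
    · obtain ⟨j, p, _, hj⟩ := mem_btagsL_shape ccs (lbl ++ [i]) 0 x hx
      exact ⟨i, j :: p, le_refl i, by simp [hj]⟩
    · obtain ⟨j, p, hij, hj⟩ := mem_btagsL_shape ts lbl (i + 1) x hx
      exact ⟨j, p, by omega, hj⟩
    · simp only [List.mem_singleton] at hx
      subst hx
      exact ⟨i, [], le_refl i, by simp⟩

-- ==================== nodup ====================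

lemma ne_head_index {lbl : List ℕ} {i j : ℕ} {p q : List ℕ} (h : i ≠ j) :
    lbl ++ i :: p ≠ lbl ++ j :: q := by
  intro hh
  have := List.append_cancel_left hh
  injection this with h1
  exact h h1

lemma ne_lbl_cons {lbl : List ℕ} {j : ℕ} {p : List ℕ} : lbl ≠ lbl ++ j :: p := by
  intro hh
  have : lbl.length = (lbl ++ j :: p).length := by rw [← hh]
  simp at this

mutual
theorem nodup_ptags (c : RTree α) (lbl : List ℕ) : (ptags c lbl).Nodup := by
  match c with
  | .node a ccs =>
    rw [ptags]
    have hmid : ∀ b, ((lbl, b) : List ℕ × Bool) ∉ ptagsL ccs lbl 0 := by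
      intro b hb
      obtain ⟨j, p, _, hj⟩ := mem_ptagsL_shape ccs lbl 0 _ hb
      exact ne_lbl_cons hj
    refine List.nodup_cons.mpr ⟨?_, ?_⟩
    · intro h
      rcases List.mem_append.mp h with h | h
      · exact hmid false h
      · simp at h
    · refine List.Nodup.append (nodup_ptagsL ccs lbl 0) (by simp) ?_
      intro x hx hx'
      simp only [List.mem_singleton] at hx'
      subst hx'
      exact hmid true hx

theorem nodup_ptagsL (cs : List (RTree α)) (lbl : List ℕ) (i : ℕ) :
    (ptagsL cs lbl i).Nodup := by
  match cs with
  | [] => rw [ptagsL]; exact List.nodup_nil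
  | c :: ts =>
    rw [ptagsL]
    refine List.Nodup.append (nodup_ptags c (lbl ++ [i])) (nodup_ptagsL ts lbl (i + 1)) ?_
    intro x hx hx'
    obtain ⟨r, hr⟩ := mem_ptags_shape c (lbl ++ [i]) x hx
    obtain ⟨j, p, hij, hj⟩ := mem_ptagsL_shape ts lbl (i + 1) x hx'
    rw [hr] at hj
    have : lbl ++ i :: r = lbl ++ j :: p := by simpa using hj
    exact ne_head_index (by omega) this
end

theorem nodup_btagsL (cs : List (RTree α)) (lbl : List ℕ) (i : ℕ) :
    ((pfcnsL cs lbl i).btags).Nodup := by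
  match cs with
  | [] => rw [pfcnsL, BTree.btags]; exact List.nodup_nil
  | .node a ccs :: ts =>
    rw [pfcnsL, BTree.btags]
    have hA : ∀ x ∈ (pfcnsL ccs (lbl ++ [i]) 0).btags,
        ∃ j p, (x : List ℕ × Bool).1 = lbl ++ i :: j :: p := by
      intro x hx
      obtain ⟨j, p, _, hj⟩ := mem_btagsL_shape ccs (lbl ++ [i]) 0 x hx
      exact ⟨j, p, by simpa using hj⟩
    have hB : ∀ x ∈ (pfcnsL ts lbl (i + 1)).btags,
        ∃ j p, i + 1 ≤ j ∧ (x : List ℕ × Bool).1 = lbl ++ j :: p :=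
      fun x hx => mem_btagsL_shape ts lbl (i + 1) x hx
    have hclA : ∀ b, ((lbl ++ [i], b) : List ℕ × Bool) ∉ (pfcnsL ccs (lbl ++ [i]) 0).btags := by
      intro b hb
      obtain ⟨j, p, hj⟩ := hA _ hb
      simp only at hj
      have : lbl ++ [i] = lbl ++ i :: j :: p := hj
      have := List.append_cancel_left this
      simp at this
    have hclB : ∀ b, ((lbl ++ [i], b) : List ℕ × Bool) ∉ (pfcnsL ts lbl (i + 1)).btags := by
      intro b hb
      obtain ⟨j, p, hij, hj⟩ := hB _ hb
      simp only at hj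
      have : lbl ++ i :: ([] : List ℕ) = lbl ++ j :: p := by simpa using hj
      exact ne_head_index (by omega) this
    refine List.nodup_cons.mpr ⟨?_, ?_⟩
    · intro h
      rcases List.mem_append.mp h with h | h
      · rcases List.mem_append.mp h with h | h
        · exact hclA false h
        · exact hclB false h
      · simp at h
    · refine List.Nodup.append ?_ (by simp) ?_
      · refine List.Nodup.append (nodup_btagsL ccs (lbl ++ [i]) 0) (nodup_btagsL ts lbl (i + 1)) ?_
        intro x hx hx'
        obtain ⟨j, p, hj⟩ := hA x hx
        obtain ⟨j', p', hij', hj'⟩ := hB x hx'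
        rw [hj] at hj'
        exact ne_head_index (show i ≠ j' by omega) hj'
      · intro x hx hx'
        simp only [List.mem_singleton] at hx'
        subst hx'
        rcases List.mem_append.mp hx with h | h
        · exact hclA true h
        · exact hclB true h

-- ==================== tag membership ====================

mutual
theorem tag_mem_ptags (c : RTree α) (lbl p : List ℕ) (b : Bool) (h : IsNode c p) :
    ((lbl ++ p, b) : List ℕ × Bool) ∈ ptags c lbl := by
  match c with
  | .node a ccs =>
    match p with
    | [] =>
      rw [ptags]
      cases b <;> simp
    | k :: p' =>
      obtain ⟨c', hg, hn⟩ := isNode_cons.mp h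
      have hm := tag_mem_ptagsL ccs lbl 0 k p' b c' hg hn
      rw [ptags]
      refine List.mem_cons_of_mem _ (List.mem_append_left _ ?_)
      simpa using hm

theorem tag_mem_ptagsL (cs : List (RTree α)) (lbl : List ℕ) (i k : ℕ) (p : List ℕ) (b : Bool)
    (c : RTree α) (hg : cs[k]? = some c) (h : IsNode c p) :
    ((lbl ++ (i + k) :: p, b) : List ℕ × Bool) ∈ ptagsL cs lbl i := by
  match cs with
  | [] => simp at hg
  | c' :: ts =>
    match k with
    | 0 =>
      rw [List.getElem?_cons_zero] at hg
      injection hg with hg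
      subst hg
      rw [ptagsL]
      refine List.mem_append_left _ ?_
      have hm := tag_mem_ptags c' (lbl ++ [i]) p b h
      simpa using hm
    | k + 1 =>
      rw [List.getElem?_cons_succ] at hg
      rw [ptagsL]
      refine List.mem_append_right _ ?_
      have hm := tag_mem_ptagsL ts lbl (i + 1) k p b c hg h
      have harith : (i + 1) + k = i + (k + 1) := by omega
      rwa [harith] at hm
end

theorem tag_mem_btagsL (cs : List (RTree α)) (lbl : List ℕ) (i k : ℕ) (p : List ℕ) (b : Bool)
    (c : RTree α) (hg : cs[k]? = some c) (h : IsNode c p) :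
    ((lbl ++ (i + k) :: p, b) : List ℕ × Bool) ∈ (pfcnsL cs lbl i).btags := by
  match cs with
  | [] => simp at hg
  | .node a ccs :: ts =>
    match k with
    | 0 =>
      rw [List.getElem?_cons_zero] at hg
      injection hg with hg
      subst hg
      rw [pfcnsL, BTree.btags]
      match p with
      | [] => cases b <;> simp
      | m :: p' =>
        obtain ⟨c'', hg', hn'⟩ := isNode_cons.mp h
        have hm := tag_mem_btagsL ccs (lbl ++ [i]) 0 m p' b c'' hg' hn'
        refine List.mem_cons_of_mem _ (List.mem_append_left _ (List.mem_append_left _ ?_))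
        simpa using hm
    | k + 1 =>
      rw [List.getElem?_cons_succ] at hg
      rw [pfcnsL, BTree.btags]
      have hm := tag_mem_btagsL ts lbl (i + 1) k p b c hg h
      have harith : (i + 1) + k = i + (k + 1) := by omega
      rw [harith] at hm
      exact List.mem_cons_of_mem _ (List.mem_append_left _ (List.mem_append_right _ hm))


-- ==================== Before lemmas (open tags, document order) ====================

mutual
theorem abefore_ptags (c : RTree α) (lbl p q : List ℕ)
    (hp : IsNode c p) (hq : IsNode c q) (h : LexLt p q) :
    Before ((lbl ++ p, false) : List ℕ × Bool) (lbl ++ q, false) (ptags c lbl) := by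
  match c with
  | .node a ccs =>
    cases h with
    | @nil y ys =>
      rw [ptags]
      obtain ⟨c', hg, hn⟩ := isNode_cons.mp hq
      have hm := tag_mem_ptagsL ccs lbl 0 y ys false c' hg hn
      have hm' : ((lbl ++ y :: ys, false) : List ℕ × Bool) ∈ ptagsL ccs lbl 0 := by
        simpa using hm
      simpa using before_cons_of_mem (List.mem_append_left _ hm')
    | @rel x xs y ys hxy =>
      obtain ⟨c₁, hg1, hn1⟩ := isNode_cons.mp hp
      obtain ⟨c₂, hg2, hn2⟩ := isNode_cons.mp hq
      have hb := abefore_ptagsL ccs lbl 0 x y xs ys c₁ c₂ hg1 hn1 hg2 hn2 (Or.inl hxy)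
      rw [ptags]
      have hb2 := (hb.append_right [(lbl, true)]).cons (lbl, false)
      simpa using hb2
    | @cons x xs ys h' =>
      obtain ⟨c₁, hg1, hn1⟩ := isNode_cons.mp hp
      obtain ⟨c₂, hg2, hn2⟩ := isNode_cons.mp hq
      have hb := abefore_ptagsL ccs lbl 0 x x xs ys c₁ c₂ hg1 hn1 hg2 hn2 (Or.inr ⟨rfl, h'⟩)
      rw [ptags]
      have hb2 := (hb.append_right [(lbl, true)]).cons (lbl, false)
      simpa using hb2

theorem abefore_ptagsL (cs : List (RTree α)) (lbl : List ℕ) (i k₁ k₂ : ℕ) (p q : List ℕ)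
    (c₁ c₂ : RTree α) (hg1 : cs[k₁]? = some c₁) (hn1 : IsNode c₁ p)
    (hg2 : cs[k₂]? = some c₂) (hn2 : IsNode c₂ q)
    (hor : k₁ < k₂ ∨ (k₁ = k₂ ∧ LexLt p q)) :
    Before ((lbl ++ (i + k₁) :: p, false) : List ℕ × Bool) (lbl ++ (i + k₂) :: q, false)
      (ptagsL cs lbl i) := by
  match cs with
  | [] => simp at hg1
  | c :: ts =>
    match k₁ with
    | 0 =>
      rw [List.getElem?_cons_zero] at hg1
      injection hg1 with hg1
      subst hg1
      match k₂ with
      | 0 =>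
        rw [List.getElem?_cons_zero] at hg2
        injection hg2 with hg2
        subst hg2
        have hlex : LexLt p q := by
          rcases hor with h | ⟨_, h⟩
          · omega
          · exact h
        have hb := abefore_ptags c (lbl ++ [i]) p q hn1 hn2 hlex
        rw [ptagsL]
        have hb2 := hb.append_right (ptagsL ts lbl (i + 1))
        simpa using hb2
      | n + 1 =>
        rw [List.getElem?_cons_succ] at hg2
        have ha := tag_mem_ptags c (lbl ++ [i]) p false hn1
        have hbm := tag_mem_ptagsL ts lbl (i + 1) n q false c₂ hg2 hn2
        rw [ptagsL]
        have hb2 := before_of_mem ha hbm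
        have harith : (i + 1) + n = i + (n + 1) := by omega
        rw [harith] at hb2
        simpa using hb2
    | m + 1 =>
      rw [List.getElem?_cons_succ] at hg1
      match k₂ with
      | 0 => omega
      | n + 1 =>
        rw [List.getElem?_cons_succ] at hg2
        have hor' : m < n ∨ (m = n ∧ LexLt p q) := by
          rcases hor with h | ⟨h, h'⟩
          · left; omega
          · right; exact ⟨by omega, h'⟩
        have hb := abefore_ptagsL ts lbl (i + 1) m n p q c₁ c₂ hg1 hn1 hg2 hn2 hor'
        rw [ptagsL]
        have hb2 := hb.append_left (ptags c (lbl ++ [i]))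
        have har1 : (i + 1) + m = i + (m + 1) := by omega
        have har2 : (i + 1) + n = i + (n + 1) := by omega
        rw [har1, har2] at hb2
        exact hb2
end

-- ==================== Before lemma (close tags, FCNS postorder) ====================

theorem bbefore (cs : List (RTree α)) (lbl : List ℕ) (i k₁ k₂ : ℕ) (p q : List ℕ)
    (c₁ c₂ : RTree α) (hg1 : cs[k₁]? = some c₁) (hn1 : IsNode c₁ p)
    (hg2 : cs[k₂]? = some c₂) (hn2 : IsNode c₂ q)
    (h : PostLT (k₁ :: p) (k₂ :: q)) :
    Before ((lbl ++ (i + k₁) :: p, true) : List ℕ × Bool) (lbl ++ (i + k₂) :: q, true)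
      ((pfcnsL cs lbl i).btags) := by
  match cs with
  | [] => simp at hg1
  | .node a ccs :: ts =>
    rw [pfcnsL, BTree.btags]
    match k₁ with
    | 0 =>
      rw [List.getElem?_cons_zero] at hg1
      injection hg1 with hg1
      subst hg1
      match k₂ with
      | 0 =>
        rw [List.getElem?_cons_zero] at hg2
        injection hg2 with hg2
        subst hg2
        have hpq : PostLT p q := by
          rw [postLT_cons_cons] at h
          rcases h with ⟨_, h⟩ | ⟨h, _⟩ | ⟨h, _⟩
          · exact h
          · omega
          · omega
        match q with
        | [] =>
          match p with
          | [] => exact absurd hpq (postLT_nil_left [])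
          | m :: p' =>
            obtain ⟨c', hg', hn'⟩ := isNode_cons.mp hn1
            have ha := tag_mem_btagsL ccs (lbl ++ [i]) 0 m p' true c' hg' hn'
            have hb2 := before_of_mem
              (List.mem_append_left ((pfcnsL ts lbl (i + 1)).btags) ha)
              (List.mem_singleton.mpr (rfl : ((lbl ++ [i], true) : List ℕ × Bool) = _))
            have hb3 := hb2.cons ((lbl ++ [i], false))
            simpa using hb3
        | n :: q' =>
          match p with
          | [] => exact absurd hpq (postLT_nil_left _)
          | m :: p' =>
            obtain ⟨c₁', hg1', hn1'⟩ := isNode_cons.mp hn1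
            obtain ⟨c₂', hg2', hn2'⟩ := isNode_cons.mp hn2
            have hb := bbefore ccs (lbl ++ [i]) 0 m n p' q' c₁' c₂' hg1' hn1' hg2' hn2' hpq
            have hb2 := ((hb.append_right ((pfcnsL ts lbl (i + 1)).btags)).append_right
              [((lbl ++ [i], true) : List ℕ × Bool)]).cons ((lbl ++ [i], false))
            simpa using hb2
      | n + 1 =>
        rw [List.getElem?_cons_succ] at hg2
        have hp' : p ≠ [] := by
          rw [postLT_cons_cons] at h
          rcases h with ⟨h, _⟩ | ⟨_, h⟩ | ⟨h, _⟩ <;> first | omega | exact h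
        match p with
        | [] => exact absurd rfl hp'
        | m :: p' =>
          obtain ⟨c', hg', hn'⟩ := isNode_cons.mp hn1
          have ha := tag_mem_btagsL ccs (lbl ++ [i]) 0 m p' true c' hg' hn'
          have hbm := tag_mem_btagsL ts lbl (i + 1) n q true c₂ hg2 hn2
          have hb2 := ((before_of_mem ha hbm).append_right
            [((lbl ++ [i], true) : List ℕ × Bool)]).cons ((lbl ++ [i], false))
          have harith : (i + 1) + n = i + (n + 1) := by omega
          rw [harith] at hb2
          simpa using hb2
    | m + 1 =>
      rw [List.getElem?_cons_succ] at hg1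
      match k₂ with
      | 0 =>
        rw [List.getElem?_cons_zero] at hg2
        injection hg2 with hg2
        have hq' : q = [] := by
          rw [postLT_cons_cons] at h
          rcases h with ⟨h, _⟩ | ⟨h, _⟩ | ⟨_, h⟩ <;> first | omega | exact h
        subst hq'
        have ha := tag_mem_btagsL ts lbl (i + 1) m p true c₁ hg1 hn1
        have hb2 := before_of_mem
          (List.mem_append_right ((pfcnsL ccs (lbl ++ [i]) 0).btags) ha)
          (List.mem_singleton.mpr (rfl : ((lbl ++ [i], true) : List ℕ × Bool) = _))
        have hb3 := hb2.cons ((lbl ++ [i], false))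
        have harith : (i + 1) + m = i + (m + 1) := by omega
        rw [harith] at hb3
        simpa using hb3
      | n + 1 =>
        rw [List.getElem?_cons_succ] at hg2
        have h' : PostLT (m :: p) (n :: q) := by
          rw [postLT_cons_cons] at h ⊢
          rcases h with ⟨h1, h2⟩ | ⟨h1, h2⟩ | ⟨h1, h2⟩
          · left; exact ⟨by omega, h2⟩
          · right; left; exact ⟨by omega, h2⟩
          · right; right; exact ⟨by omega, h2⟩
        have hb := bbefore ts lbl (i + 1) m n p q c₁ c₂ hg1 hn1 hg2 hn2 h'
        have hb2 := ((hb.append_left ((pfcnsL ccs (lbl ++ [i]) 0).btags)).append_right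
          [((lbl ++ [i], true) : List ℕ × Bool)]).cons ((lbl ++ [i], false))
        have har1 : (i + 1) + m = i + (m + 1) := by omega
        have har2 : (i + 1) + n = i + (n + 1) := by omega
        rw [har1, har2] at hb2
        exact hb2


-- ==================== top-level bridges ====================

lemma nodup_tagList (t : RTree α) : (tagList t).Nodup := nodup_ptags t []

lemma open_lt (t : RTree α) (p q : List ℕ) (hp : IsNode t p) (hq : IsNode t q)
    (h : LexLt p q) : posOpen t p < posOpen t q := by
  have hb : Before ((p, false) : List ℕ × Bool) (q, false) (tagList t) := by
    have hb0 := abefore_ptags t [] p q hp hq h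
    simpa [tagList] using hb0
  have h2 := hb.indexOf_lt (nodup_tagList t)
  simp only [posOpen]
  exact Nat.add_lt_add_right h2 1

lemma open_lt_iff (t : RTree α) (p q : List ℕ) (hp : IsNode t p) (hq : IsNode t q) :
    posOpen t p < posOpen t q ↔ LexLt p q := by
  constructor
  · intro h
    rcases lex_trichotomy p q with rfl | h' | h'
    · omega
    · exact h'
    · exact absurd (open_lt t q p hq hp h') (by omega)
  · exact open_lt t p q hp hq

lemma open_le_iff (t : RTree α) (p q : List ℕ) (hp : IsNode t p) (hq : IsNode t q) :
    posOpen t p ≤ posOpen t q ↔ (p = q ∨ LexLt p q) := by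
  constructor
  · intro h
    rcases lex_trichotomy p q with rfl | h' | h'
    · exact Or.inl rfl
    · exact Or.inr h'
    · exact absurd (open_lt t q p hq hp h') (by omega)
  · rintro (rfl | h)
    · exact le_refl _
    · exact le_of_lt (open_lt t p q hp hq h)

lemma nodup_btagList (t : RTree α) : (btagList t).Nodup := by
  cases t with
  | node a cs =>
    rw [btagList, pfcns]
    simp only [BTree.btags, List.append_nil]
    have hA : ∀ (b : Bool), (([], b) : List ℕ × Bool) ∉ (pfcnsL cs [] 0).btags := by
      intro b hb
      obtain ⟨j, r, _, hj⟩ := mem_btagsL_shape cs [] 0 _ hb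
      simp at hj
    refine List.nodup_cons.mpr ⟨?_, ?_⟩
    · intro h
      rcases List.mem_append.mp h with h | h
      · exact hA false h
      · simp at h
    · refine List.Nodup.append (nodup_btagsL cs [] 0) (by simp) ?_
      intro x hx hx'
      simp only [List.mem_singleton] at hx'
      subst hx'
      exact hA true hx

lemma close_lt (t : RTree α) (p q : List ℕ) (hp : IsNode t p) (hq : IsNode t q)
    (h : PostLT p q) : posClose' t p < posClose' t q := by
  have hb : Before ((p, true) : List ℕ × Bool) (q, true) (btagList t) := by
    cases t with
    | node a cs =>
      rw [btagList, pfcns]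
      simp only [BTree.btags, List.append_nil]
      match q with
      | [] =>
        match p with
        | [] => exact absurd h (postLT_nil_left [])
        | m :: p' =>
          obtain ⟨c, hg, hn⟩ := isNode_cons.mp hp
          have ha := tag_mem_btagsL cs [] 0 m p' true c hg hn
          have ha' : ((m :: p', true) : List ℕ × Bool) ∈ (pfcnsL cs [] 0).btags := by
            simpa using ha
          exact (before_of_mem ha'
            (List.mem_singleton.mpr rfl)).cons (([], false))
      | n :: q' =>
        match p with
        | [] => exact absurd h (postLT_nil_left _)
        | m :: p' =>
          obtain ⟨c₁, hg1, hn1⟩ := isNode_cons.mp hp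
          obtain ⟨c₂, hg2, hn2⟩ := isNode_cons.mp hq
          have hb0 := bbefore cs [] 0 m n p' q' c₁ c₂ hg1 hn1 hg2 hn2 h
          have hb1 := (hb0.append_right [(([] : List ℕ), true)]).cons (([], false))
          simpa using hb1
  have h2 := hb.indexOf_lt (nodup_btagList t)
  simp only [posClose']
  exact Nat.add_lt_add_right h2 1

lemma close_lt_iff (t : RTree α) (p q : List ℕ) (hp : IsNode t p) (hq : IsNode t q)
    (hne : p ≠ q) : posClose' t p < posClose' t q ↔ PostLT p q := by
  constructor
  · intro h
    by_contra hc
    rcases postLT_total hne with h' | h'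
    · exact hc h'
    · exact absurd (close_lt t q p hq hp h') (by omega)
  · exact close_lt t p q hp hq

end RTree

/-- `w` is a later sibling of `v` (as paths): same parent, larger last index. -/
def LaterSib (w v : List ℕ) : Prop := ∃ q i j, v = q ++ [i] ∧ w = q ++ [j] ∧ i < j

/-- For distinct nodes `v₁, v₂` of `t`, `pos'(v̄₁) < pos'(v̄₂)` iff
(1) `v₁` lies in the subtree of `v₂` in `FCNS(t)` (equivalently, in `t`: `v₁` is a
descendant of `v₂`, or `v₁` is a later sibling of `v₂`, or `v₁` is a descendant of a
later sibling of `v₂`); or (2) there is a node `u` of `t` with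
`depth(u) ≤ depth(v₁) − 1` and `pos(v₁) < pos(u) ≤ pos(v₂)`. -/
theorem posClose'_lt_iff {α : Type} (t : RTree α) (v₁ v₂ : List ℕ)
    (h₁ : RTree.IsNode t v₁) (h₂ : RTree.IsNode t v₂) (hne : v₁ ≠ v₂) :
    RTree.posClose' t v₁ < RTree.posClose' t v₂ ↔
      ((v₂ <+: v₁ ∨ ∃ w, LaterSib w v₂ ∧ w <+: v₁) ∨
        ∃ u, RTree.IsNode t u ∧ u.length + 1 ≤ v₁.length ∧
          RTree.posOpen t v₁ < RTree.posOpen t u ∧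
          RTree.posOpen t u ≤ RTree.posOpen t v₂) := by
  have hpc : ∀ {x y : List ℕ}, RTree.IsNode t y → x <+: y → RTree.IsNode t x :=
    fun hy hxy => RTree.IsNode.of_prefix hy hxy
  have key := postLT_iff_rhs (IsN := RTree.IsNode t) hpc h₂ hne
  have hsib : ∀ w, LaterSib w v₂ ↔ LaterSib' w v₂ := fun w => Iff.rfl
  rw [RTree.close_lt_iff t v₁ v₂ h₁ h₂ hne, key]
  constructor
  · rintro (h | ⟨u, hu, hlen, hlex, hle⟩)
    · left
      rcases h with h | ⟨w, hw, hwp⟩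
      · exact Or.inl h
      · exact Or.inr ⟨w, (hsib w).mpr hw, hwp⟩
    · right
      exact ⟨u, hu, hlen, (RTree.open_lt_iff t v₁ u h₁ hu).mpr hlex,
        (RTree.open_le_iff t u v₂ hu h₂).mpr hle⟩
  · rintro (h | ⟨u, hu, hlen, hlt, hle⟩)
    · left
      rcases h with h | ⟨w, hw, hwp⟩
      · exact Or.inl h
      · exact Or.inr ⟨w, (hsib w).mp hw, hwp⟩
    · right
      exact ⟨u, hu, hlen, (RTree.open_lt_iff t v₁ u h₁ hu).mp hlt,
        (RTree.open_le_iff t u v₂ hu h₂).mp hle⟩
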